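/- Let P be a π-stationary stochastic matrix, and let Q be a π-stationary stochastic matrix with G·Q·G = Q and Q(x,y) > 0 for all x, y. Then the Pythagorean identity D^π(P‖Q) = D^π(P‖GPG) + D^π(GPG‖Q) holds. In particular, taking Q = Π, one has D^π(P‖Π) ≥ D^π(GPG‖Π), so GPG is the unique information projection of P onto the set {Q π-stationary : GQG = Q} under the KL divergence. -/

import Mathlib

open Matrix Finset

/-- Total mass of the orbit (block) `i` under `π`. -/
noncomputable def orbMass {n k : ℕ} (π : Fin n → ℝ) (part : Fin n → Fin k) (i : Fin k) : ℝ :=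
  ∑ z ∈ Finset.univ.filter (fun z => part z = i), π z

/-- The Gibbs orbit kernel. -/
noncomputable def gibbsKer {n k : ℕ} (π : Fin n → ℝ) (part : Fin n → Fin k) :
    Matrix (Fin n) (Fin n) ℝ :=
  Matrix.of fun x y => if part y = part x then π y / orbMass π part (part x) else 0

/-- The `μ`-weighted KL divergence between two kernels.  (When `P x y = 0` the whole
summand vanishes, which implements the convention `0·log(0/a) = 0`.) -/
noncomputable def klDiv {m : ℕ} (μ : Fin m → ℝ) (P Q : Matrix (Fin m) (Fin m) ℝ) : ℝ :=
  ∑ x, ∑ y, μ x * P x y * Real.log (P x y / Q x y)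

/-! ### Auxiliary definitions and lemmas -/

/-- Joint mass of a pair of blocks under `π ⊗ M`. -/
noncomputable def smat {n k : ℕ} (π : Fin n → ℝ) (part : Fin n → Fin k)
    (M : Matrix (Fin n) (Fin n) ℝ) (i j : Fin k) : ℝ :=
  ∑ a ∈ Finset.univ.filter (fun a => part a = i),
    ∑ b ∈ Finset.univ.filter (fun b => part b = j), π a * M a b

section Aux

variable {n k : ℕ} (π : Fin n → ℝ) (part : Fin n → Fin k)

lemma orbMass_pos (hπpos : ∀ x, 0 < π x) (hpart : Function.Surjective part) (i : Fin k) :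
    0 < orbMass π part i := by
  obtain ⟨x, hx⟩ := hpart i
  exact Finset.sum_pos (fun z _ => hπpos z) ⟨x, by simp [hx]⟩

lemma gpg_apply (M : Matrix (Fin n) (Fin n) ℝ) (x y : Fin n) :
    (gibbsKer π part * M * gibbsKer π part) x y
      = smat π part M (part x) (part y) * π y
          / (orbMass π part (part x) * orbMass π part (part y)) := by
  simp only [Matrix.mul_apply]
  have h1 : ∀ b : Fin n, (∑ a, gibbsKer π part x a * M a b) * gibbsKer π part b y
      = ∑ a, (if part a = part x then (if part b = part y then
          π a * M a b * (π y / (orbMass π part (part x) * orbMass π part (part y)))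
          else 0) else 0) := by
    intro b
    rw [Finset.sum_mul]
    refine Finset.sum_congr rfl fun a _ => ?_
    simp only [gibbsKer, Matrix.of_apply]
    by_cases hA : part a = part x <;> by_cases hB : part y = part b
    · rw [if_pos hA, if_pos hB, if_pos hA, if_pos hB.symm, ← hB]; ring
    · rw [if_pos hA, if_neg hB, if_pos hA, if_neg (fun h => hB h.symm)]; ring
    · rw [if_neg hA, if_neg hA]; ring
    · rw [if_neg hA, if_neg hA]; ring
  simp_rw [h1]
  rw [Finset.sum_comm]
  have h2 : ∀ a : Fin n, (∑ b, if part a = part x then (if part b = part y then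
      π a * M a b * (π y / (orbMass π part (part x) * orbMass π part (part y)))
      else 0) else 0)
      = if part a = part x then ∑ b ∈ Finset.univ.filter (fun b => part b = part y),
          π a * M a b * (π y / (orbMass π part (part x) * orbMass π part (part y)))
        else 0 := by
    intro a
    by_cases hA : part a = part x
    · simp only [if_pos hA]
      exact (Finset.sum_filter _ _).symm
    · simp [hA]
  simp_rw [h2]
  rw [← Finset.sum_filter, smat, mul_div_assoc, Finset.sum_mul]
  exact Finset.sum_congr rfl fun a _ => by rw [Finset.sum_mul]

lemma smat_nonneg (hπpos : ∀ x, 0 < π x) (M : Matrix (Fin n) (Fin n) ℝ)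
    (hM : ∀ x y, 0 ≤ M x y) (i j : Fin k) : 0 ≤ smat π part M i j :=
  Finset.sum_nonneg fun a _ => Finset.sum_nonneg fun b _ =>
    mul_nonneg (hπpos a).le (hM a b)

lemma le_smat (hπpos : ∀ x, 0 < π x) (M : Matrix (Fin n) (Fin n) ℝ)
    (hM : ∀ x y, 0 ≤ M x y) (x y : Fin n) :
    π x * M x y ≤ smat π part M (part x) (part y) := by
  have hx : x ∈ Finset.univ.filter (fun a => part a = part x) := by simp
  have hy : y ∈ Finset.univ.filter (fun b => part b = part y) := by simp
  calc π x * M x y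
      ≤ ∑ b ∈ Finset.univ.filter (fun b => part b = part y), π x * M x b :=
        Finset.single_le_sum (fun b _ => mul_nonneg (hπpos x).le (hM x b)) hy
    _ ≤ smat π part M (part x) (part y) :=
        Finset.single_le_sum (f := fun a =>
          ∑ b ∈ Finset.univ.filter (fun b => part b = part y), π a * M a b)
          (fun a _ => Finset.sum_nonneg fun b _ => mul_nonneg (hπpos a).le (hM a b)) hx

lemma group_sum (M : Matrix (Fin n) (Fin n) ℝ) (g : Fin k → Fin k → ℝ) :
    ∑ i, ∑ j, smat π part M i j * g i j
      = ∑ x, ∑ y, π x * M x y * g (part x) (part y) := by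
  have key : ∀ i j, smat π part M i j * g i j
      = ∑ a ∈ Finset.univ.filter (fun a => part a = i),
          ∑ b ∈ Finset.univ.filter (fun b => part b = j),
            π a * M a b * g (part a) (part b) := by
    intro i j
    rw [smat, Finset.sum_mul]
    refine Finset.sum_congr rfl fun a ha => ?_
    rw [Finset.sum_mul]
    refine Finset.sum_congr rfl fun b hb => ?_
    rw [(Finset.mem_filter.1 ha).2, (Finset.mem_filter.1 hb).2]
  simp_rw [key]
  have h2 : ∀ i, ∑ j, ∑ a ∈ Finset.univ.filter (fun a => part a = i),
      ∑ b ∈ Finset.univ.filter (fun b => part b = j), π a * M a b * g (part a) (part b)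
      = ∑ a ∈ Finset.univ.filter (fun a => part a = i),
          ∑ b, π a * M a b * g (part a) (part b) := by
    intro i
    rw [Finset.sum_comm]
    exact Finset.sum_congr rfl fun a _ =>
      Finset.sum_fiberwise Finset.univ part (fun b => π a * M a b * g (part a) (part b))
  simp_rw [h2]
  exact Finset.sum_fiberwise Finset.univ part
    (fun a => ∑ b, π a * M a b * g (part a) (part b))

end Aux

/-- Nonnegativity of the weighted KL divergence. -/
lemma klDiv_nonneg' {m : ℕ} (μ : Fin m → ℝ) (hμ : ∀ x, 0 ≤ μ x)
    (A B : Matrix (Fin m) (Fin m) ℝ)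
    (hA : ∀ x y, 0 ≤ A x y) (hArow : ∀ x, ∑ y, A x y = 1)
    (hB : ∀ x y, 0 ≤ B x y) (hBrow : ∀ x, ∑ y, B x y = 1)
    (habs : ∀ x y, 0 < A x y → 0 < B x y) :
    0 ≤ klDiv μ A B := by
  have key : ∀ x y, μ x * (A x y - B x y) ≤ μ x * A x y * Real.log (A x y / B x y) := by
    intro x y
    rcases eq_or_lt_of_le (hA x y) with h | h
    · rw [← h]
      have := mul_nonneg (hμ x) (hB x y)
      simp only [mul_zero, zero_mul]
      nlinarith
    · have hBpos := habs x y h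
      have hlog : Real.log (B x y / A x y) ≤ B x y / A x y - 1 :=
        Real.log_le_sub_one_of_pos (div_pos hBpos h)
      have hlogE : Real.log (A x y / B x y) = - Real.log (B x y / A x y) := by
        rw [← Real.log_inv, inv_div]
      have hmul := mul_le_mul_of_nonneg_left
        (by linarith : 1 - B x y / A x y ≤ Real.log (A x y / B x y))
        (mul_nonneg (hμ x) h.le)
      have heq : μ x * A x y * (1 - B x y / A x y) = μ x * (A x y - B x y) := by
        field_simp
      linarith
  have h0 : ∑ x, ∑ y, μ x * (A x y - B x y) = 0 := by
    have : ∀ x, ∑ y, μ x * (A x y - B x y) = 0 := by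
      intro x
      rw [← Finset.mul_sum, Finset.sum_sub_distrib, hArow, hBrow]
      ring
    simp [this]
  calc (0:ℝ) = ∑ x, ∑ y, μ x * (A x y - B x y) := h0.symm
    _ ≤ klDiv μ A B :=
        Finset.sum_le_sum fun x _ => Finset.sum_le_sum fun y _ => key x y

/-- Equality case: vanishing KL divergence against a positive kernel forces equality. -/
lemma klDiv_eq_zero_iff' {m : ℕ} (μ : Fin m → ℝ) (hμ : ∀ x, 0 < μ x)
    (A B : Matrix (Fin m) (Fin m) ℝ)
    (hA : ∀ x y, 0 ≤ A x y) (hArow : ∀ x, ∑ y, A x y = 1)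
    (hB : ∀ x y, 0 < B x y) (hBrow : ∀ x, ∑ y, B x y = 1)
    (h0 : klDiv μ A B = 0) : B = A := by
  have key : ∀ x y, μ x * (A x y - B x y) ≤ μ x * A x y * Real.log (A x y / B x y) := by
    intro x y
    rcases eq_or_lt_of_le (hA x y) with h | h
    · rw [← h]
      have := mul_nonneg (hμ x).le (hB x y).le
      simp only [mul_zero, zero_mul]
      nlinarith
    · have hBpos := hB x y
      have hlog : Real.log (B x y / A x y) ≤ B x y / A x y - 1 :=
        Real.log_le_sub_one_of_pos (div_pos hBpos h)
      have hlogE : Real.log (A x y / B x y) = - Real.log (B x y / A x y) := by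
        rw [← Real.log_inv, inv_div]
      have hmul := mul_le_mul_of_nonneg_left
        (by linarith : 1 - B x y / A x y ≤ Real.log (A x y / B x y))
        (mul_nonneg (hμ x).le h.le)
      have heq : μ x * A x y * (1 - B x y / A x y) = μ x * (A x y - B x y) := by
        field_simp
      linarith
  have hsub : ∑ x, ∑ y,
      (μ x * A x y * Real.log (A x y / B x y) - μ x * (A x y - B x y)) = 0 := by
    have h1 : ∀ x, ∑ y, (μ x * A x y * Real.log (A x y / B x y) - μ x * (A x y - B x y))
        = ∑ y, μ x * A x y * Real.log (A x y / B x y)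
          - ∑ y, μ x * (A x y - B x y) := fun x => Finset.sum_sub_distrib _ _
    have h2 : ∀ x, ∑ y, μ x * (A x y - B x y) = 0 := by
      intro x
      rw [← Finset.mul_sum, Finset.sum_sub_distrib, hArow, hBrow]
      ring
    simp_rw [h1, h2, sub_zero]
    exact h0
  have hterm : ∀ x y,
      μ x * A x y * Real.log (A x y / B x y) - μ x * (A x y - B x y) = 0 := by
    have houter := (Finset.sum_eq_zero_iff_of_nonneg
      (fun x _ => Finset.sum_nonneg fun y _ => sub_nonneg.2 (key x y))).1 hsub
    intro x y
    exact (Finset.sum_eq_zero_iff_of_nonneg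
      (fun y _ => sub_nonneg.2 (key x y))).1 (houter x (Finset.mem_univ x)) y
      (Finset.mem_univ y)
  ext x y
  have ht := hterm x y
  rcases eq_or_lt_of_le (hA x y) with h | h
  · exfalso
    rw [← h] at ht
    simp only [mul_zero, zero_mul, zero_sub, sub_zero] at ht
    nlinarith [mul_pos (hμ x) (hB x y)]
  · by_contra hne
    have hu : B x y / A x y ≠ 1 := by
      intro hc
      apply hne
      field_simp at hc
      exact hc
    have hstrict := Real.log_lt_sub_one_of_pos (div_pos (hB x y) h) hu
    have hlogE : Real.log (A x y / B x y) = - Real.log (B x y / A x y) := by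
      rw [← Real.log_inv, inv_div]
    have h3 : μ x * A x y * (1 - B x y / A x y) < μ x * A x y * (- Real.log (B x y / A x y)) :=
      mul_lt_mul_of_pos_left (by linarith) (mul_pos (hμ x) h)
    have h4 : μ x * A x y * (1 - B x y / A x y) = μ x * (A x y - B x y) := by
      field_simp
    rw [hlogE] at ht
    linarith

section Core

variable {n k : ℕ} (π : Fin n → ℝ) (part : Fin n → Fin k)

lemma smat_gpg (hπpos : ∀ x, 0 < π x) (hpart : Function.Surjective part)
    (P : Matrix (Fin n) (Fin n) ℝ) (i j : Fin k) :
    smat π part (gibbsKer π part * P * gibbsKer π part) i j = smat π part P i j := by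
  have hm := orbMass_pos π part hπpos hpart
  set C : ℝ := smat π part P i j / (orbMass π part i * orbMass π part j) with hC
  have key : smat π part (gibbsKer π part * P * gibbsKer π part) i j
      = ∑ a ∈ Finset.univ.filter (fun a => part a = i),
          ∑ b ∈ Finset.univ.filter (fun b => part b = j), π a * π b * C := by
    rw [smat]
    refine Finset.sum_congr rfl fun a ha => Finset.sum_congr rfl fun b hb => ?_
    rw [gpg_apply, (Finset.mem_filter.1 ha).2, (Finset.mem_filter.1 hb).2, hC]
    ring
  have h3 : (∑ a ∈ Finset.univ.filter (fun a => part a = i),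
        ∑ b ∈ Finset.univ.filter (fun b => part b = j), π a * π b * C)
      = ((∑ a ∈ Finset.univ.filter (fun a => part a = i), π a)
          * (∑ b ∈ Finset.univ.filter (fun b => part b = j), π b)) * C := by
    rw [Finset.sum_mul_sum, Finset.sum_mul]
    exact Finset.sum_congr rfl fun a _ => (Finset.sum_mul _ _ _).symm
  have h1 : (∑ a ∈ Finset.univ.filter (fun a => part a = i), π a) = orbMass π part i := rfl
  have h2 : (∑ b ∈ Finset.univ.filter (fun b => part b = j), π b) = orbMass π part j := rfl
  rw [key, h3, h1, h2, hC, mul_comm,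
    div_mul_cancel₀ _ (mul_pos (hm i) (hm j)).ne']

/-- The Pythagorean identity for any kernel of the block-constant form. -/
lemma pyth (hπpos : ∀ x, 0 < π x) (hpart : Function.Surjective part)
    (P : Matrix (Fin n) (Fin n) ℝ) (hPnonneg : ∀ x y, 0 ≤ P x y)
    (Q' : Matrix (Fin n) (Fin n) ℝ) (hQ'pos : ∀ x y, 0 < Q' x y)
    (c : Fin k → Fin k → ℝ)
    (hc : ∀ x y, Q' x y = c (part x) (part y) * π y) :
    klDiv π P Q'
      = klDiv π P (gibbsKer π part * P * gibbsKer π part)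
        + klDiv π (gibbsKer π part * P * gibbsKer π part) Q' := by
  have hm := orbMass_pos π part hπpos hpart
  set R := gibbsKer π part * P * gibbsKer π part with hRdef
  set d : Fin k → Fin k → ℝ :=
    fun i j => smat π part P i j / (orbMass π part i * orbMass π part j) with hd
  have hR : ∀ x y, R x y = d (part x) (part y) * π y := by
    intro x y
    rw [hRdef, gpg_apply, hd]
    rw [div_mul_eq_mul_div]
  set f : Fin k → Fin k → ℝ := fun i j => Real.log (d i j / c i j) with hf
  have claim1 : ∀ x y, Real.log (R x y / Q' x y) = f (part x) (part y) := by
    intro x y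
    rw [hR x y, hc x y, mul_div_mul_right _ _ (hπpos y).ne']
  have hRpos : ∀ x y, 0 < P x y → 0 < R x y := by
    intro x y hP
    rw [hR x y]
    have h1 : 0 < smat π part P (part x) (part y) :=
      lt_of_lt_of_le (mul_pos (hπpos x) hP) (le_smat π part hπpos P hPnonneg x y)
    have := hm (part x)
    have := hm (part y)
    have := hπpos y
    rw [hd]
    positivity
  have claim2 : ∀ x y, π x * P x y * Real.log (P x y / Q' x y)
      = π x * P x y * Real.log (P x y / R x y)
        + π x * P x y * f (part x) (part y) := by
    intro x y
    rcases eq_or_lt_of_le (hPnonneg x y) with h | h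
    · rw [← h]; ring
    · have hRp := hRpos x y h
      have hQp := hQ'pos x y
      rw [← claim1 x y]
      rw [Real.log_div h.ne' hQp.ne', Real.log_div h.ne' hRp.ne',
        Real.log_div hRp.ne' hQp.ne']
      ring
  have e1 : klDiv π P Q'
      = klDiv π P R + ∑ x, ∑ y, π x * P x y * f (part x) (part y) := by
    rw [klDiv, klDiv, ← Finset.sum_add_distrib]
    refine Finset.sum_congr rfl fun x _ => ?_
    rw [← Finset.sum_add_distrib]
    exact Finset.sum_congr rfl fun y _ => claim2 x y
  have e2 : klDiv π R Q' = ∑ x, ∑ y, π x * R x y * f (part x) (part y) := by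
    rw [klDiv]
    refine Finset.sum_congr rfl fun x _ => Finset.sum_congr rfl fun y _ => ?_
    rw [claim1 x y]
  have e3 : ∑ x, ∑ y, π x * P x y * f (part x) (part y)
      = ∑ x, ∑ y, π x * R x y * f (part x) (part y) := by
    rw [← group_sum π part P f, ← group_sum π part R f]
    refine Finset.sum_congr rfl fun i _ => Finset.sum_congr rfl fun j _ => ?_
    rw [hRdef, smat_gpg π part hπpos hpart]
  rw [e1, e2, e3]

lemma gibbs_row (hπpos : ∀ x, 0 < π x) (hpart : Function.Surjective part) (x : Fin n) :
    ∑ y, gibbsKer π part x y = 1 := by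
  have hm := orbMass_pos π part hπpos hpart (part x)
  simp only [gibbsKer, Matrix.of_apply]
  rw [← Finset.sum_filter, ← Finset.sum_div]
  exact div_self hm.ne'

lemma mul_row {A B : Matrix (Fin n) (Fin n) ℝ}
    (hA : ∀ x, ∑ y, A x y = 1) (hB : ∀ x, ∑ y, B x y = 1) (x : Fin n) :
    ∑ y, (A * B) x y = 1 := by
  simp only [Matrix.mul_apply]
  rw [Finset.sum_comm]
  calc ∑ a, ∑ y, A x a * B a y = ∑ a, A x a * ∑ y, B a y := by
        exact Finset.sum_congr rfl fun a _ => (Finset.mul_sum _ _ _).symm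
    _ = 1 := by simp_rw [hB]; simpa using hA x

end Core

/-- the Pythagorean identity
`D^π(P‖Q) = D^π(P‖GPG) + D^π(GPG‖Q)` for any `Q` in the `G`-invariant set with positive
entries; in particular `D^π(P‖Π) ≥ D^π(GPG‖Π)`, and `GPG` is the unique information
projection of `P` onto the invariant set. -/
theorem stmt11 {n k : ℕ} (hn : 0 < n)
    (π : Fin n → ℝ) (hπpos : ∀ x, 0 < π x) (hπsum : ∑ x, π x = 1)
    (part : Fin n → Fin k) (hpart : Function.Surjective part)
    (P : Matrix (Fin n) (Fin n) ℝ)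
    (hPnonneg : ∀ x y, 0 ≤ P x y) (hProw : ∀ x, ∑ y, P x y = 1)
    (hPstat : ∀ y, ∑ x, π x * P x y = π y)
    (Q : Matrix (Fin n) (Fin n) ℝ)
    (hQnonneg : ∀ x y, 0 ≤ Q x y) (hQrow : ∀ x, ∑ y, Q x y = 1)
    (hQstat : ∀ y, ∑ x, π x * Q x y = π y)
    (hQinv : gibbsKer π part * Q * gibbsKer π part = Q)
    (hQpos : ∀ x y, 0 < Q x y) :
    klDiv π P Q
        = klDiv π P (gibbsKer π part * P * gibbsKer π part)
          + klDiv π (gibbsKer π part * P * gibbsKer π part) Q ∧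
      klDiv π (gibbsKer π part * P * gibbsKer π part) (Matrix.of fun _ y => π y)
        ≤ klDiv π P (Matrix.of fun _ y => π y) ∧
      klDiv π P (gibbsKer π part * P * gibbsKer π part) ≤ klDiv π P Q ∧
      (klDiv π P (gibbsKer π part * P * gibbsKer π part) = klDiv π P Q →
        Q = gibbsKer π part * P * gibbsKer π part) := by
  have hm := orbMass_pos π part hπpos hpart
  set R := gibbsKer π part * P * gibbsKer π part with hRdef
  -- structure of Q
  have hQc : ∀ x y, Q x y
      = (fun i j => smat π part Q i j / (orbMass π part i * orbMass π part j))
          (part x) (part y) * π y := by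
    intro x y
    conv_lhs => rw [← hQinv]
    rw [gpg_apply, div_mul_eq_mul_div]
  have hpythQ := pyth π part hπpos hpart P hPnonneg Q hQpos
    (fun i j => smat π part Q i j / (orbMass π part i * orbMass π part j)) hQc
  -- structure of Π
  have hPic : ∀ x y, (Matrix.of fun _ y => π y : Matrix (Fin n) (Fin n) ℝ) x y
      = (fun _ _ => (1:ℝ)) (part x) (part y) * π y := by
    intro x y; simp
  have hpythPi := pyth π part hπpos hpart P hPnonneg (Matrix.of fun _ y => π y)
    (fun _ y => hπpos y) (fun _ _ => (1:ℝ)) hPic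
  -- R is a stochastic matrix
  have hGnn : ∀ x y, 0 ≤ gibbsKer π part x y := by
    intro x y
    simp only [gibbsKer, Matrix.of_apply]
    split_ifs
    · exact div_nonneg (hπpos y).le (hm _).le
    · exact le_refl 0
  have hRnn : ∀ x y, 0 ≤ R x y := by
    intro x y
    rw [hRdef, gpg_apply]
    exact div_nonneg (mul_nonneg (smat_nonneg π part hπpos P hPnonneg _ _) (hπpos y).le)
      (mul_nonneg (hm _).le (hm _).le)
  have hGrow := gibbs_row π part hπpos hpart
  have hRrow : ∀ x, ∑ y, R x y = 1 := by
    intro x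
    rw [hRdef]
    exact mul_row (mul_row hGrow hProw) hGrow x
  have hRabs : ∀ x y, 0 < P x y → 0 < R x y := by
    intro x y hP
    rw [hRdef, gpg_apply]
    have h1 : 0 < smat π part P (part x) (part y) :=
      lt_of_lt_of_le (mul_pos (hπpos x) hP) (le_smat π part hπpos P hPnonneg x y)
    exact div_pos (mul_pos h1 (hπpos y)) (mul_pos (hm _) (hm _))
  have h1 : 0 ≤ klDiv π P R :=
    klDiv_nonneg' π (fun x => (hπpos x).le) P R hPnonneg hProw hRnn hRrow hRabs
  have h2 : 0 ≤ klDiv π R Q :=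
    klDiv_nonneg' π (fun x => (hπpos x).le) R Q hRnn hRrow
      (fun x y => (hQpos x y).le) hQrow (fun x y _ => hQpos x y)
  refine ⟨hpythQ, ?_, ?_, ?_⟩
  · have h3 : 0 ≤ klDiv π P (Matrix.of fun _ y => π y) - klDiv π R (Matrix.of fun _ y => π y) := by
      rw [hpythPi]; linarith
    linarith
  · linarith
  · intro heq
    have h0 : klDiv π R Q = 0 := by linarith
    exact klDiv_eq_zero_iff' π hπpos R Q hRnn hRrow hQpos hQrow h0
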